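/- Let G be a row-finite directed graph, let (E, v_0) be a 1-sink extension of G, and let e_1 e_2 e_3 ⋯ be an infinite path in G (i.e., e_i ∈ G^1 with r(e_i) = s(e_{i+1}) for all i ∈ ℕ) such that r(e_i) ≥ v_0 in E for every i ∈ ℕ. Then γ := {w ∈ G^0 : w ≥ s(e_i) for some i ∈ ℕ} is a maximal tail in G and γ ≥ v_0. -/

import Mathlib

/-- A directed graph realized inside ambient vertex type `V` and edge type `E`,
with globally given source and range maps. -/
structure DGraph (V E : Type*) where
  verts : Set V
  edges : Set E

variable {V E : Type*}

/-- The endpoints of every edge of the graph are vertices of the graph. -/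
def WellFormed (s r : E → V) (G : DGraph V E) : Prop :=
  ∀ e ∈ G.edges, s e ∈ G.verts ∧ r e ∈ G.verts

/-- Row-finite: every vertex emits only finitely many edges. -/
def RowFinite (s : E → V) (G : DGraph V E) : Prop :=
  ∀ v : V, {e ∈ G.edges | s e = v}.Finite

/-- A sink is a vertex emitting no edges. -/
def IsSink (s : E → V) (G : DGraph V E) (v : V) : Prop :=
  v ∈ G.verts ∧ ∀ e ∈ G.edges, s e ≠ v

/-- A source is a vertex receiving no edges. -/
def IsSource (r : E → V) (G : DGraph V E) (v : V) : Prop :=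
  v ∈ G.verts ∧ ∀ e ∈ G.edges, r e ≠ v

/-- A path is a nonempty finite sequence of composable edges of the graph. -/
def IsPath (s r : E → V) (G : DGraph V E) (p : List E) : Prop :=
  p ≠ [] ∧ (∀ e ∈ p, e ∈ G.edges) ∧ p.Chain' (fun e f => r e = s f)

/-- `PathFromTo s r G p v w` : `p` is a path in `G` with source `v` and range `w`. -/
def PathFromTo (s r : E → V) (G : DGraph V E) (p : List E) (v w : V) : Prop :=
  IsPath s r G p ∧ (∃ e, p.head? = some e ∧ s e = v) ∧
    (∃ e, p.getLast? = some e ∧ r e = w)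

/-- `v ≥ w` : `v = w` or there is a path from `v` to `w`. -/
def Reach (s r : E → V) (G : DGraph V E) (v w : V) : Prop :=
  v = w ∨ ∃ p, PathFromTo s r G p v w

/-- A loop based at `v` is a path with source and range `v`. -/
def IsLoop (s r : E → V) (G : DGraph V E) (p : List E) (v : V) : Prop :=
  PathFromTo s r G p v v

/-- A simple loop returns to its base point exactly once. -/
def IsSimpleLoop (s r : E → V) (G : DGraph V E) (p : List E) (v : V) : Prop :=
  IsLoop s r G p v ∧
    ∀ i (h : i + 1 < p.length), r (p.get ⟨i, Nat.lt_of_succ_lt h⟩) ≠ v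

/-- Condition (K): every vertex is the base of no loop or of at least two
distinct simple loops. -/
def ConditionK (s r : E → V) (G : DGraph V E) : Prop :=
  ∀ v ∈ G.verts, (¬ ∃ p, IsLoop s r G p v) ∨
    ∃ p q, IsSimpleLoop s r G p v ∧ IsSimpleLoop s r G q v ∧ p ≠ q

/-- A maximal tail in `G`. -/
def MaximalTail (s r : E → V) (G : DGraph V E) (γ : Set V) : Prop :=
  γ.Nonempty ∧ γ ⊆ G.verts ∧
  (∀ v ∈ γ, ∀ w ∈ γ, ∃ y ∈ γ, Reach s r G v y ∧ Reach s r G w y) ∧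
  (∀ v w, Reach s r G v w → w ∈ γ → v ∈ γ) ∧
  (∀ w ∈ γ, ∃ e ∈ G.edges, s e = w ∧ r e ∈ γ)

/-- `(Eg, v0)` is a 1-sink extension of `G`. -/
structure OneSinkExt (s r : E → V) (G Eg : DGraph V E) (v0 : V) : Prop where
  wfG : WellFormed s r G
  wfE : WellFormed s r Eg
  sub_verts : G.verts ⊆ Eg.verts
  sub_edges : G.edges ⊆ Eg.edges
  rowfin : RowFinite s Eg
  H_fin : (Eg.verts \ G.verts).Finite
  H_no_sources : ∀ v ∈ Eg.verts \ G.verts, ¬ IsSource r Eg v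
  v0_mem : v0 ∈ Eg.verts \ G.verts
  v0_sink : IsSink s Eg v0
  sink_unique : ∀ v ∈ Eg.verts \ G.verts, IsSink s Eg v → v = v0
  no_H_loops : ∀ p v, IsLoop s r Eg p v →
    ¬ (∀ e ∈ p, s e ∈ Eg.verts \ G.verts ∧ r e ∈ Eg.verts \ G.verts)
  new_edge_range : ∀ e ∈ Eg.edges, e ∉ G.edges → r e ∈ Eg.verts \ G.verts
  sinks_preserved : ∀ v, IsSink s G v → IsSink s Eg v

/-- The closure of the sink `v0` : the union of all maximal tails of `G`
every vertex of which reaches `v0` in `Eg`. -/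
def closureSink (s r : E → V) (G Eg : DGraph V E) (v0 : V) : Set V :=
  {v | ∃ γ, MaximalTail s r G γ ∧ (∀ u ∈ γ, Reach s r Eg u v0) ∧ v ∈ γ}

/-- Hereditary subset of vertices. -/
def Hereditary (s r : E → V) (G : DGraph V E) (K : Set V) : Prop :=
  ∀ e ∈ G.edges, s e ∈ K → r e ∈ K

/-- Saturated subset of vertices. -/
def Saturated (s r : E → V) (G : DGraph V E) (K : Set V) : Prop :=
  ∀ v ∈ G.verts, ¬ IsSink s G v → (∀ e ∈ G.edges, s e = v → r e ∈ K) → v ∈ K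

lemma reach_trans' (s r : E → V) {G : DGraph V E} {u v w : V}
    (h1 : Reach s r G u v) (h2 : Reach s r G v w) : Reach s r G u w := by
  rcases h1 with rfl | ⟨p, ⟨⟨pne, pedges, pch⟩, ⟨e1, he1, hse1⟩, ⟨e2, he2, hre2⟩⟩⟩
  · exact h2
  rcases h2 with rfl | ⟨q, ⟨⟨qne, qedges, qch⟩, ⟨d1, hd1, hsd1⟩, ⟨d2, hd2, hrd2⟩⟩⟩
  · exact Or.inr ⟨p, ⟨⟨pne, pedges, pch⟩, ⟨e1, he1, hse1⟩, ⟨e2, he2, hre2⟩⟩⟩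
  refine Or.inr ⟨p ++ q, ⟨⟨by simp [pne], ?_, ?_⟩, ⟨e1, ?_, hse1⟩, ⟨d2, ?_, hrd2⟩⟩⟩
  · intro e hep
    rcases List.mem_append.mp hep with h | h
    · exact pedges e h
    · exact qedges e h
  · rw [List.Chain', List.isChain_append]
    refine ⟨pch, qch, ?_⟩
    intro x hx y hy
    rw [he2] at hx; rw [hd1] at hy
    cases hx; cases hy
    rw [hre2, hsd1]
  · cases p with
    | nil => exact absurd rfl pne
    | cons a t => simpa using he1
  · rw [List.getLast?_append, hd2]; rfl

lemma reach_edge' (s r : E → V) {G : DGraph V E} {e : E} (he : e ∈ G.edges) :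
    Reach s r G (s e) (r e) :=
  Or.inr ⟨[e], ⟨by simp, by simpa, List.isChain_singleton _⟩, ⟨e, rfl, rfl⟩, ⟨e, rfl, rfl⟩⟩

lemma reach_mono' (s r : E → V) {G Eg : DGraph V E} (hE : G.edges ⊆ Eg.edges)
    {v w : V} (h : Reach s r G v w) : Reach s r Eg v w := by
  rcases h with rfl | ⟨p, ⟨⟨pne, pedges, pch⟩, h1, h2⟩⟩
  · exact Or.inl rfl
  · exact Or.inr ⟨p, ⟨⟨pne, fun e hep => hE (pedges e hep), pch⟩, h1, h2⟩⟩

/-- Given a 1-sink extension `(Eg, v0)` of a row-finite graph `G`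
and an infinite path `e₁e₂e₃⋯` in `G` with `r(eᵢ) ≥ v0` in `Eg` for every `i`,
the set `γ = {w ∈ G^0 : w ≥ s(eᵢ) for some i}` is a maximal tail of `G` and
`γ ≥ v0`. -/
theorem tail_of_infinite_path_is_maximal_tail
    (s r : E → V) (G Eg : DGraph V E) (v0 : V)
    (hGrf : RowFinite s G)
    (hext : OneSinkExt s r G Eg v0)
    (f : ℕ → E) (hf : ∀ i, f i ∈ G.edges)
    (hchain : ∀ i, r (f i) = s (f (i + 1)))
    (hreach : ∀ i, Reach s r Eg (r (f i)) v0) :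
    MaximalTail s r G {w | w ∈ G.verts ∧ ∃ i, Reach s r G w (s (f i))} ∧
    ∀ v ∈ {w | w ∈ G.verts ∧ ∃ i, Reach s r G w (s (f i))},
      Reach s r Eg v v0 := by
  set γ : Set V := {w | w ∈ G.verts ∧ ∃ i, Reach s r G w (s (f i))} with hγ
  have hsf : ∀ i, s (f i) ∈ G.verts := fun i => (hext.wfG _ (hf i)).1
  have hrf : ∀ i, r (f i) ∈ G.verts := fun i => (hext.wfG _ (hf i)).2
  have reach_f : ∀ i k, i ≤ k → Reach s r G (s (f i)) (s (f k)) := by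
    intro i k hik
    induction k, hik using Nat.le_induction with
    | base => exact Or.inl rfl
    | succ k hk ih =>
        refine reach_trans' s r ih ?_
        rw [← hchain k]
        exact reach_edge' s r (hf k)
  constructor
  · refine ⟨⟨s (f 0), hsf 0, 0, Or.inl rfl⟩, fun v hv => hv.1, ?_, ?_, ?_⟩
    · rintro v ⟨hvG, i, hvi⟩ w ⟨hwG, j, hwj⟩
      refine ⟨s (f (max i j)), ⟨hsf _, max i j, Or.inl rfl⟩, ?_, ?_⟩
      · exact reach_trans' s r hvi (reach_f i _ (le_max_left i j))
      · exact reach_trans' s r hwj (reach_f j _ (le_max_right i j))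
    · rintro v w hvw ⟨hwG, i, hwi⟩
      have hv : v ∈ G.verts := by
        rcases hvw with rfl | ⟨p, ⟨⟨pne, pedges, pch⟩, ⟨e, he, hse⟩, _⟩⟩
        · exact hwG
        · have hep : e ∈ p := List.mem_of_mem_head? (by rw [he]; rfl)
          exact hse ▸ (hext.wfG e (pedges e hep)).1
      exact ⟨hv, i, reach_trans' s r hvw hwi⟩
    · rintro w ⟨hwG, i, hwi⟩
      rcases hwi with heq | ⟨p, ⟨⟨pne, pedges, pch⟩, ⟨e, he, hse⟩, ⟨e', he', hre'⟩⟩⟩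
      · exact ⟨f i, hf i, heq.symm, hrf i, i + 1, Or.inl (hchain i)⟩
      · cases p with
        | nil => exact absurd rfl pne
        | cons a t =>
          have hea : a = e := by simpa using he
          subst hea
          have haG : a ∈ G.edges := pedges a (List.mem_cons_self)
          refine ⟨a, haG, hse, (hext.wfG a haG).2, i, ?_⟩
          cases t with
          | nil =>
            have : a = e' := by simpa using he'
            subst this
            exact Or.inl hre'
          | cons b t' =>
            rw [List.Chain', List.isChain_cons_cons] at pch
            refine Or.inr ⟨b :: t', ⟨List.cons_ne_nil b t',
              fun x hx => pedges x (List.mem_cons_of_mem a hx), pch.2⟩,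
              ⟨b, rfl, pch.1.symm⟩, ⟨e', ?_, hre'⟩⟩
            rw [← he', List.getLast?_cons_cons]
  · rintro v ⟨hvG, i, hvi⟩
    refine reach_trans' s r (reach_mono' s r hext.sub_edges hvi) ?_
    exact reach_trans' s r (reach_edge' s r (hext.sub_edges (hf i))) (hreach i)
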